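/- arXiv:2003.01546 — 2 statements merged into one kernel-verified Lean document; each statement's English description precedes it below -/
import Mathlib

section
/- In the predictor setting, |⟨Δx, Δs⟩| ≤ (1/2)·μᵉ·θ, where θ := ν·(1 − 2γ + γ²/β) + 1 − β/2 + γ²/(2β) − γ; if moreover ⟨x,s⟩·⟨x̃,s̃⟩ ≥ ν², then also |⟨Δx, Δs⟩| ≤ θ·μ/(2β). -/
open Matrix

/-- The norm induced by a (positive definite) matrix `P`: `‖v‖_P = √(vᵀ P v)`. -/
noncomputable def vnorm {n : ℕ} (P : Matrix (Fin n) (Fin n) ℝ) (v : Fin n → ℝ) : ℝ :=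
  Real.sqrt (v ⬝ᵥ (P *ᵥ v))

/-- The operator norm `‖Q‖_P = sup {‖Q u‖_{P⁻¹} : ‖u‖_P ≤ 1}`. -/
noncomputable def opNorm {n : ℕ} (P Q : Matrix (Fin n) (Fin n) ℝ) : ℝ :=
  sSup ((fun u => vnorm P⁻¹ (Q *ᵥ u)) '' {u : Fin n → ℝ | vnorm P u ≤ 1})

/-- The Loewner order: `Loewner P Q` means `P ⪯ Q`, i.e. `Q - P` is positive semidefinite. -/
def Loewner {n : ℕ} (P Q : Matrix (Fin n) (Fin n) ℝ) : Prop :=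
  (Q - P).PosSemidef

private lemma quad_nonneg' {n : ℕ} {M : Matrix (Fin n) (Fin n) ℝ} (hM : M.PosSemidef)
    (v : Fin n → ℝ) : 0 ≤ v ⬝ᵥ (M *ᵥ v) := by
  simpa using hM.dotProduct_mulVec_nonneg v

private lemma symm_dot' {n : ℕ} {M : Matrix (Fin n) (Fin n) ℝ} (hM : M.IsSymm)
    (a b : Fin n → ℝ) : a ⬝ᵥ (M *ᵥ b) = b ⬝ᵥ (M *ᵥ a) := by
  rw [dotProduct_mulVec, ← mulVec_transpose, hM, dotProduct_comm]

set_option maxHeartbeats 1000000 in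
private lemma scalar_endgame (ν β γ μe θ μ X Y T P Q : ℝ)
    (hν : 1 ≤ ν) (hβ0 : 0 < β) (hβ1 : β ≤ 1)
    (hXpos : 0 < X) (hYpos : 0 < Y) (hT : 0 < T) (hμepos : 0 < μe)
    (hsum : X + T = (ν + 1) * μe)
    (hN1 : β * μe ≤ T) (hN2 : β * μe * Y ≤ ν)
    (hNT : ν ^ 2 ≤ X * Y)
    (hA : 4 * P ≤ X - 2 * (γ * μe) * ν + (γ * μe) ^ 2 * Y)
    (hB : 4 * Q * T ≤ (γ * μe - T) ^ 2)
    (hPQ : P + Q = 0)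
    (hθ : θ = ν * (1 - 2 * γ + γ ^ 2 / β) + 1 - β / 2 + γ ^ 2 / (2 * β) - γ)
    (hμ : μ = X / ν) :
    |P| ≤ 1 / 2 * μe * θ ∧ |P| ≤ θ * μ / (2 * β) := by
  have h2βθ : 2 * β * θ = 2 * ν * (β - 2 * γ * β + γ ^ 2) + 2 * β - β ^ 2 + γ ^ 2
      - 2 * γ * β := by
    rw [hθ]
    field_simp
  have hXlow : β * μe * ν ≤ X := by
    have h1 : X * (β * μe * Y) ≤ X * ν := mul_le_mul_of_nonneg_left hN2 hXpos.le
    have h2 : β * μe * ν ^ 2 ≤ β * μe * (X * Y) :=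
      mul_le_mul_of_nonneg_left hNT (by positivity)
    have h3 : β * μe * ν ^ 2 ≤ X * ν := by linarith [h1, h2]
    by_contra h
    push_neg at h
    linarith [mul_lt_mul_of_pos_right h (by linarith : (0:ℝ) < ν), h3]
  have main : |P| ≤ 1 / 2 * μe * θ := by
    rcases le_or_gt 0 P with hPn | hPn
    · rw [abs_of_nonneg hPn]
      have hXub : X ≤ (ν + 1) * μe - β * μe := by linarith [hsum, hN1]
      have hsub : β * ((γ * μe) ^ 2 * Y) ≤ γ ^ 2 * μe * ν := by
        have h := mul_le_mul_of_nonneg_left hN2 (mul_nonneg (sq_nonneg γ) hμepos.le)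
        linarith [h]
      have h4 : 4 * (β * P) ≤ μe * (β * (ν + 1 - β) - 2 * β * γ * ν + γ ^ 2 * ν) := by
        have hAβ := mul_le_mul_of_nonneg_left hA hβ0.le
        have hXβ := mul_le_mul_of_nonneg_left hXub hβ0.le
        linarith [hAβ, hXβ, hsub]
      have hcoef : β * (ν + 1 - β) - 2 * β * γ * ν + γ ^ 2 * ν ≤ 2 * β * θ := by
        linarith [h2βθ, sq_nonneg (γ - β),
          mul_nonneg (by linarith : (0:ℝ) ≤ ν) (sq_nonneg (γ - β)),
          mul_nonneg (by linarith : (0:ℝ) ≤ ν)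
            (mul_nonneg hβ0.le (by linarith : (0:ℝ) ≤ 1 - β)),
          mul_nonneg hβ0.le (by linarith : (0:ℝ) ≤ 1 - β)]
      have hfin : 4 * P * β ≤ 2 * (μe * θ) * β := by
        have h5 := mul_le_mul_of_nonneg_left hcoef hμepos.le
        linarith [h4, h5]
      have := le_of_mul_le_mul_right hfin hβ0
      linarith
    · have hQ : Q = -P := by linarith
      rw [abs_of_neg hPn]
      have hTub : T ≤ (ν + 1 - ν * β) * μe := by linarith [hsum, hXlow]
      have hsub1 : β * (γ * μe) ^ 2 ≤ γ ^ 2 * μe * T := by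
        have h := mul_le_mul_of_nonneg_left hN1 (mul_nonneg (sq_nonneg γ) hμepos.le)
        linarith [h]
      have hsub2 : T ^ 2 ≤ T * ((ν + 1 - ν * β) * μe) := by
        have h := mul_le_mul_of_nonneg_left hTub hT.le
        linarith [h]
      have hBB : β * ((γ * μe - T) ^ 2)
          ≤ μe * T * (γ ^ 2 - 2 * β * γ + β * (ν + 1 - ν * β)) := by
        have h := mul_le_mul_of_nonneg_left hsub2 hβ0.le
        linarith [hsub1, h]
      have hcoef : γ ^ 2 - 2 * β * γ + β * (ν + 1 - ν * β) ≤ 2 * β * θ := by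
        linarith [h2βθ, sq_nonneg (γ - β),
          mul_nonneg (by linarith : (0:ℝ) ≤ ν) (sq_nonneg (γ - β)),
          mul_nonneg (by linarith : (0:ℝ) ≤ ν)
            (mul_nonneg hβ0.le (by linarith : (0:ℝ) ≤ 1 - β)),
          mul_nonneg hβ0.le (by linarith : (0:ℝ) ≤ 1 - β)]
      have hfin : 4 * Q * (β * T) ≤ 2 * (μe * θ) * (β * T) := by
        have hBβ := mul_le_mul_of_nonneg_left hB hβ0.le
        have h3 := mul_le_mul_of_nonneg_left hcoef (mul_nonneg hμepos.le hT.le)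
        linarith [hBβ, hBB, h3]
      have h6 := le_of_mul_le_mul_right hfin (mul_pos hβ0 hT)
      linarith [h6, hQ.symm.le, hQ.le]
  refine ⟨main, ?_⟩
  have hθnn : 0 ≤ θ := by
    by_contra h
    push_neg at h
    linarith [h2βθ, mul_pos hβ0 (neg_pos.mpr h), sq_nonneg (γ - β),
      mul_nonneg (by linarith : (0:ℝ) ≤ ν) (sq_nonneg (γ - β)),
      mul_nonneg (by linarith : (0:ℝ) ≤ ν)
        (mul_nonneg hβ0.le (by linarith : (0:ℝ) ≤ 1 - β)),
      mul_nonneg hβ0.le (by linarith : (0:ℝ) ≤ 1 - β)]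
  have hμμe : β * μe ≤ μ := by
    rw [hμ, le_div_iff₀ (by linarith : (0:ℝ) < ν)]
    linarith [hXlow]
  have hstep : 1 / 2 * μe * θ ≤ θ * μ / (2 * β) := by
    rw [le_div_iff₀ (by positivity : (0:ℝ) < 2 * β)]
    have h := mul_le_mul_of_nonneg_left hμμe hθnn
    linarith [h]
  linarith [main, hstep]

set_option maxHeartbeats 1000000 in
/-- `|⟨Δx, Δs⟩| ≤ (1/2) μᵉ θ`, and under the Nesterov–Todd inequality also
`|⟨Δx, Δs⟩| ≤ θ μ / (2β)`. -/
theorem stmt10 {n : ℕ}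
    (ν β γ : ℝ) (hν : 1 ≤ ν) (hβ0 : 0 < β) (hβ1 : β ≤ 1)
    (x s xt st Δx Δs : Fin n → ℝ) (τ κ Δτ Δκ : ℝ) (hτ : 0 < τ) (hκ : 0 < κ)
    (W : Matrix (Fin n) (Fin n) ℝ) (hWsymm : W.IsSymm) (hWpd : W.PosDef)
    (hWx : W *ᵥ x = s) (hWxt : W *ᵥ xt = st) (hxst : x ⬝ᵥ st = ν)
    (μe : ℝ) (hμe : μe = (x ⬝ᵥ s + τ * κ) / (ν + 1))
    (hN1 : β * μe ≤ τ * κ) (hN2 : β * μe * (xt ⬝ᵥ st) ≤ ν)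
    (hdir1 : W *ᵥ Δx + Δs = -s + (γ * μe) • st)
    (hdir2 : τ * Δκ + κ * Δτ = -(τ * κ) + γ * μe)
    (hdir3 : Δx ⬝ᵥ Δs + Δτ * Δκ = 0)
    (θ : ℝ) (hθ : θ = ν * (1 - 2 * γ + γ ^ 2 / β) + 1 - β / 2 + γ ^ 2 / (2 * β) - γ)
    (μ : ℝ) (hμ : μ = x ⬝ᵥ s / ν) :
    |Δx ⬝ᵥ Δs| ≤ (1 / 2) * μe * θ ∧
    (ν ^ 2 ≤ (x ⬝ᵥ s) * (xt ⬝ᵥ st) → |Δx ⬝ᵥ Δs| ≤ θ * μ / (2 * β)) := by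
  have hν1 : (0:ℝ) < ν + 1 := by linarith
  -- matrix preliminaries
  have hdet : IsUnit W.det := isUnit_iff_ne_zero.mpr hWpd.det_pos.ne'
  have hWinv : W⁻¹ * W = 1 := W.nonsing_inv_mul hdet
  have hWinv' : W * W⁻¹ = 1 := W.mul_nonsing_inv hdet
  have hWipsd : (W⁻¹).PosSemidef := hWpd.inv.posSemidef
  have hinvs : W⁻¹ *ᵥ s = x := by rw [← hWx, mulVec_mulVec, hWinv, one_mulVec]
  have hinvst : W⁻¹ *ᵥ st = xt := by rw [← hWxt, mulVec_mulVec, hWinv, one_mulVec]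
  set X := x ⬝ᵥ s with hX
  set Y := xt ⬝ᵥ st with hY
  set P := Δx ⬝ᵥ Δs with hP
  -- basic dot product facts
  have hxWxt : x ⬝ᵥ (W *ᵥ xt) = ν := by rw [hWxt, hxst]
  have hxtWx : xt ⬝ᵥ (W *ᵥ x) = ν := by rw [symm_dot' hWsymm, hxWxt]
  have hsxt : s ⬝ᵥ xt = ν := by rw [← hWx, dotProduct_comm, hxtWx]
  have hxts : xt ⬝ᵥ s = ν := by rw [dotProduct_comm, hsxt]
  have hstx : st ⬝ᵥ x = ν := by rw [dotProduct_comm, hxst]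
  have hsx : s ⬝ᵥ x = X := dotProduct_comm s x
  have hstxt : st ⬝ᵥ xt = Y := dotProduct_comm st xt
  -- positivity
  have hx0 : x ≠ 0 := by
    intro h; rw [h] at hxst; simp at hxst; linarith [hxst]
  have hxt0 : xt ≠ 0 := by
    intro h
    rw [h] at hWxt
    simp at hWxt
    rw [← hWxt] at hxst
    simp at hxst
    linarith [hxst]
  have hXpos : 0 < X := by
    rw [hX, ← hWx]
    simpa using hWpd.dotProduct_mulVec_pos hx0
  have hYpos : 0 < Y := by
    rw [hY, ← hWxt]
    simpa using hWpd.dotProduct_mulVec_pos hxt0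
  have hT : 0 < τ * κ := mul_pos hτ hκ
  have hsum : X + τ * κ = (ν + 1) * μe := by
    rw [hμe]
    field_simp
  have hμepos : 0 < μe := by
    by_contra h
    push_neg at h
    nlinarith [hXpos, hT, hsum, hν]
  -- Nesterov-Todd inequality
  have hNT : ν ^ 2 ≤ X * Y := by
    have h0 := quad_nonneg' hWpd.posSemidef (Y • x - ν • xt)
    have hexp : (Y • x - ν • xt) ⬝ᵥ (W *ᵥ (Y • x - ν • xt))
        = Y ^ 2 * X - 2 * Y * ν * ν + ν ^ 2 * Y := by
      rw [mulVec_sub, mulVec_smul, mulVec_smul]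
      simp only [sub_dotProduct, dotProduct_sub, smul_dotProduct, dotProduct_smul,
        smul_eq_mul, hWx, hWxt, hxst, hxts, ← hX, ← hY]
      ring
    rw [hexp] at h0
    nlinarith [hYpos]
  -- the A inequality
  have hA : 4 * P ≤ X - 2 * (γ * μe) * ν + (γ * μe) ^ 2 * Y := by
    have hc1 : W⁻¹ *ᵥ (W *ᵥ Δx) = Δx := by rw [mulVec_mulVec, hWinv, one_mulVec]
    have hc2 : (W *ᵥ Δx) ⬝ᵥ (W⁻¹ *ᵥ Δs) = P := by
      rw [dotProduct_comm, symm_dot' hWsymm, mulVec_mulVec, hWinv', one_mulVec, ← hP]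
    have hE1 : (W *ᵥ Δx + Δs) ⬝ᵥ (W⁻¹ *ᵥ (W *ᵥ Δx + Δs))
        = X - 2 * (γ * μe) * ν + (γ * μe) ^ 2 * Y := by
      rw [hdir1]
      have hrr : W⁻¹ *ᵥ (-s + (γ * μe) • st) = -x + (γ * μe) • xt := by
        rw [mulVec_add, mulVec_neg, mulVec_smul, hinvs, hinvst]
      rw [hrr]
      simp only [add_dotProduct, dotProduct_add, neg_dotProduct, dotProduct_neg,
        smul_dotProduct, dotProduct_smul, smul_eq_mul, hsx, hsxt, hstx, hstxt, hxst]
      ring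
    have hE2 : (W *ᵥ Δx + Δs) ⬝ᵥ (W⁻¹ *ᵥ (W *ᵥ Δx + Δs))
        = Δx ⬝ᵥ (W *ᵥ Δx) + 2 * P + Δs ⬝ᵥ (W⁻¹ *ᵥ Δs) := by
      rw [mulVec_add, hc1]
      simp only [add_dotProduct, dotProduct_add]
      rw [hc2, dotProduct_comm (W *ᵥ Δx) Δx, dotProduct_comm Δs Δx, ← hP]
      ring
    have hlow : 0 ≤ Δx ⬝ᵥ (W *ᵥ Δx) - 2 * P + Δs ⬝ᵥ (W⁻¹ *ᵥ Δs) := by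
      have h0 := quad_nonneg' hWipsd (W *ᵥ Δx - Δs)
      rw [mulVec_sub, hc1] at h0
      simp only [sub_dotProduct, dotProduct_sub] at h0
      rw [hc2, dotProduct_comm (W *ᵥ Δx) Δx, dotProduct_comm Δs Δx, ← hP] at h0
      linarith [h0]
    have hEeq := hE2.symm.trans hE1
    linarith [hlow, hEeq]
  -- the B inequality
  have hB : 4 * (Δτ * Δκ) * (τ * κ) ≤ (γ * μe - τ * κ) ^ 2 := by
    have key : (τ * Δκ + κ * Δτ) ^ 2 = (γ * μe - τ * κ) ^ 2 := by
      rw [hdir2]; ring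
    nlinarith [sq_nonneg (τ * Δκ - κ * Δτ), key]
  have final := scalar_endgame ν β γ μe θ μ X Y (τ * κ) P (Δτ * Δκ)
    hν hβ0 hβ1 hXpos hYpos hT hμepos hsum hN1 hN2 hNT hA hB hdir3 hθ hμ
  exact ⟨final.1, fun _ => final.2⟩
end

section
/- Suppose x₊, s₊, x̃₊, s̃₊ ∈ ℝⁿ, ν ≥ 1, τ₊, κ₊ > 0, W₊ is a symmetric positive definite n×n matrix with W₊·x₊ = s₊ and W₊·x̃₊ = s̃₊, μ₊ := ⟨x₊, s₊⟩/ν, and δP₊ := x₊ − μ₊·x̃₊. Suppose Δx, Δs ∈ ℝⁿ and Δτ, Δκ ∈ ℝ satisfy W₊·Δx + Δs = μ₊·s̃₊ − s₊, τ₊·Δκ + κ₊·Δτ = 0, and ⟨Δx, Δs⟩ + Δτ·Δκ = 0. Then (τ₊ + Δτ)·(κ₊ + Δκ) ≥ τ₊·κ₊ − (1/2)·‖δP₊‖_{W₊}², where ‖v‖_{W₊} := √(vᵀW₊v). Moreover, if τ₊·κ₊ − (1/2)·‖δP₊‖_{W₊}² > 0, then τ₊ + Δτ > 0 and κ₊ +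 Δκ > 0. -/
open Matrix

lemma symm_dot {n : ℕ} (W : Matrix (Fin n) (Fin n) ℝ) (hW : W.IsSymm)
    (u v : Fin n → ℝ) : u ⬝ᵥ (W *ᵥ v) = v ⬝ᵥ (W *ᵥ u) := by
  rw [Matrix.dotProduct_mulVec, ← Matrix.mulVec_transpose, hW.eq, dotProduct_comm]

/-- Corrector bound on the homogenization variables:
`(τ₊ + Δτ)(κ₊ + Δκ) ≥ τ₊κ₊ − (1/2)‖δP₊‖_{W₊}²`, with positivity when the bound is positive. -/
theorem stmt16 {n : ℕ} (ν : ℝ) (hν : 1 ≤ ν)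
    (xp sp xtp stp Δx Δs : Fin n → ℝ) (τp κp Δτ Δκ : ℝ) (hτ : 0 < τp) (hκ : 0 < κp)
    (Wp : Matrix (Fin n) (Fin n) ℝ) (hWsymm : Wp.IsSymm) (hWpd : Wp.PosDef)
    (hWx : Wp *ᵥ xp = sp) (hWxt : Wp *ᵥ xtp = stp)
    (μp : ℝ) (hμp : μp = xp ⬝ᵥ sp / ν)
    (δPp : Fin n → ℝ) (hδPp : δPp = xp - μp • xtp)
    (hdir1 : Wp *ᵥ Δx + Δs = μp • stp - sp)
    (hdir2 : τp * Δκ + κp * Δτ = 0)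
    (hdir3 : Δx ⬝ᵥ Δs + Δτ * Δκ = 0) :
    τp * κp - (1 / 2) * vnorm Wp δPp ^ 2 ≤ (τp + Δτ) * (κp + Δκ) ∧
    (0 < τp * κp - (1 / 2) * vnorm Wp δPp ^ 2 → 0 < τp + Δτ ∧ 0 < κp + Δκ) := by
  have hpsd := hWpd.posSemidef
  set a : ℝ := Δx ⬝ᵥ (Wp *ᵥ Δx) with ha
  set b : ℝ := Δx ⬝ᵥ (Wp *ᵥ δPp) with hb
  set c : ℝ := δPp ⬝ᵥ (Wp *ᵥ δPp) with hc
  have hc0 : 0 ≤ c := hpsd.dotProduct_mulVec_nonneg δPp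
  have ha0 : 0 ≤ a := hpsd.dotProduct_mulVec_nonneg Δx
  have hsum : 0 ≤ a + 2 * b + c := by
    have h := hpsd.dotProduct_mulVec_nonneg (Δx + δPp)
    have hexp : (Δx + δPp) ⬝ᵥ (Wp *ᵥ (Δx + δPp)) = a + 2 * b + c := by
      simp only [Matrix.mulVec_add, add_dotProduct, dotProduct_add,
        symm_dot Wp hWsymm δPp Δx, ha, hb, hc]
      ring
    simpa [hexp] using h
  -- Δs = -(Wp *ᵥ δPp) - Wp *ᵥ Δx
  have hWδ : Wp *ᵥ δPp = sp - μp • stp := by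
    rw [hδPp, Matrix.mulVec_sub, Matrix.mulVec_smul, hWx, hWxt]
  have hΔs : Δs = -(Wp *ᵥ δPp) - Wp *ᵥ Δx := by
    rw [hWδ]
    have := hdir1
    funext i
    have hi := congrFun hdir1 i
    simp only [Pi.add_apply, Pi.sub_apply, Pi.smul_apply, Pi.neg_apply, smul_eq_mul] at hi ⊢
    linarith
  have hdot : Δx ⬝ᵥ Δs = -b - a := by
    rw [hΔs]
    simp only [dotProduct_sub, dotProduct_neg, ← ha, ← hb]
  have hvn : vnorm Wp δPp ^ 2 = c := Real.sq_sqrt hc0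
  have hkey : (τp + Δτ) * (κp + Δκ) = τp * κp - Δx ⬝ᵥ Δs := by nlinarith [hdir2, hdir3]
  have hbound : τp * κp - (1 / 2) * vnorm Wp δPp ^ 2 ≤ (τp + Δτ) * (κp + Δκ) := by
    rw [hkey, hvn, hdot]; linarith
  refine ⟨hbound, fun hpos => ?_⟩
  have hprod : 0 < (τp + Δτ) * (κp + Δκ) := lt_of_lt_of_le hpos hbound
  have hΔκ : Δκ = -(κp * Δτ) / τp := by field_simp; linarith
  have hτΔ : 0 < τp + Δτ := by nlinarith [sq_nonneg (τp + Δτ), sq_nonneg (τp - Δτ)]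
  constructor
  · exact hτΔ
  · nlinarith
end
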